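/- Let A be a real m×n matrix, b ∈ range A, and P a polynomial with P(0) = 0 and P(λ) ≠ 0 for all nonzero eigenvalues λ of AᵀA. Write P(x) = x·P'(x). Then for all x ∈ ℝⁿ: Ax = b if and only if P(AᵀA) x = P'(AᵀA) Aᵀ b. -/

import Mathlib

open Matrix Polynomial

lemma pow_mulVec_eigen {n : ℕ} {M : Matrix (Fin n) (Fin n) ℝ} (hM : M.IsHermitian)
    (k : ℕ) (j : Fin n) :
    (M ^ k) *ᵥ ⇑(hM.eigenvectorBasis j) =
      (hM.eigenvalues j) ^ k • ⇑(hM.eigenvectorBasis j) := by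
  induction k with
  | zero => simp [Matrix.one_mulVec]
  | succ k ih =>
    rw [pow_succ, ← Matrix.mulVec_mulVec, hM.mulVec_eigenvectorBasis,
      Matrix.mulVec_smul, ih, smul_smul, pow_succ, mul_comm]

lemma aeval_mulVec_eigen {n : ℕ} {M : Matrix (Fin n) (Fin n) ℝ} (hM : M.IsHermitian)
    (q : Polynomial ℝ) (j : Fin n) :
    (Polynomial.aeval M q) *ᵥ ⇑(hM.eigenvectorBasis j) =
      q.eval (hM.eigenvalues j) • ⇑(hM.eigenvectorBasis j) := by
  induction q using Polynomial.induction_on' with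
  | add p q hp hq =>
    rw [map_add, Matrix.add_mulVec, hp, hq, Polynomial.eval_add, add_smul]
  | monomial k c =>
    rw [Polynomial.aeval_monomial, Polynomial.eval_monomial]
    rw [Algebra.algebraMap_eq_smul_one, smul_mul_assoc, one_mul,
      Matrix.smul_mulVec, pow_mulVec_eigen hM, smul_smul]

theorem stmt_7 {m n : ℕ} (A : Matrix (Fin m) (Fin n) ℝ) (b : Fin m → ℝ)
    (hb : ∃ x₀ : Fin n → ℝ, A.mulVec x₀ = b)
    (P P' : Polynomial ℝ) (hPP' : P = Polynomial.X * P')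
    (hP : ∀ μ : ℝ, μ ≠ 0 →
      Module.End.HasEigenvalue (Matrix.toLin' (Aᵀ * A)) μ → P.eval μ ≠ 0)
    (x : Fin n → ℝ) :
    A.mulVec x = b ↔
      (Polynomial.aeval (Aᵀ * A) P).mulVec x =
        (Polynomial.aeval (Aᵀ * A) P').mulVec (Aᵀ.mulVec b) := by
  set M := Aᵀ * A with hMdef
  have hM : M.IsHermitian := by
    have := Matrix.isHermitian_conjTranspose_mul_self A
    rwa [Matrix.conjTranspose_eq_transpose_of_trivial] at this
  -- forward implication, for an arbitrary vector
  have fwd : ∀ z : Fin n → ℝ, A.mulVec z = b →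
      (Polynomial.aeval M P).mulVec z = (Polynomial.aeval M P').mulVec (Aᵀ.mulVec b) := by
    intro z hz
    have hMz : M.mulVec z = Aᵀ.mulVec b := by
      rw [hMdef, ← Matrix.mulVec_mulVec, hz]
    have : Polynomial.aeval M P = (Polynomial.aeval M P') * M := by
      rw [hPP', mul_comm Polynomial.X P', _root_.map_mul, Polynomial.aeval_X]
    rw [this, ← Matrix.mulVec_mulVec, hMz]
  obtain ⟨x₀, hx₀⟩ := hb
  constructor
  · exact fwd x
  · intro h
    -- the difference y = x - x₀ satisfies P(M) y = 0
    set y : Fin n → ℝ := x - x₀ with hy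
    have hPy : (Polynomial.aeval M P).mulVec y = 0 := by
      rw [hy, Matrix.mulVec_sub, h, fwd x₀ hx₀, sub_self]
    -- show M y = 0 using the eigenbasis
    set B := hM.eigenvectorBasis with hB
    have hmulsum : ∀ (N : Matrix (Fin n) (Fin n) ℝ) (f : Fin n → (Fin n → ℝ)),
        N *ᵥ (∑ j, f j) = ∑ j, N *ᵥ (f j) := fun N f =>
      map_sum N.mulVecLin f Finset.univ
    set e := WithLp.linearEquiv 2 ℝ (Fin n → ℝ) with he
    have hsum : y = ∑ j, B.repr (e.symm y) j • e (B j) := by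
      have h1 := congrArg (⇑e) (B.sum_repr (e.symm y))
      rw [map_sum] at h1
      simp only [_root_.map_smul, LinearEquiv.apply_symm_apply] at h1
      exact h1.symm
    have hli : LinearIndependent ℝ (fun j => e (B j)) := by
      have := B.toBasis.linearIndependent.map' e.toLinearMap e.ker
      simpa [Function.comp_def] using this
    have hrepr : ∀ j : Fin n, P.eval (hM.eigenvalues j) * (B.repr (e.symm y) j) = 0 := by
      have h0 : ∑ j, (P.eval (hM.eigenvalues j) * B.repr (e.symm y) j) • e (B j) = 0 := by
        rw [← hPy]
        conv_rhs => rw [hsum]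
        rw [hmulsum]
        refine (Finset.sum_congr rfl (fun j _ => ?_)).symm
        have hterm : (aeval M) P *ᵥ e (B j) = P.eval (hM.eigenvalues j) • e (B j) :=
          aeval_mulVec_eigen hM P j
        rw [Matrix.mulVec_smul, hterm, smul_smul, mul_comm]
      exact fun j => Fintype.linearIndependent_iff.mp hli _ h0 j
    have hMy : M.mulVec y = 0 := by
      conv_lhs => rw [hsum]
      rw [hmulsum]
      apply Finset.sum_eq_zero
      intro j _
      have hMterm : M *ᵥ e (B j) = hM.eigenvalues j • e (B j) :=
        hM.mulVec_eigenvectorBasis j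
      rw [Matrix.mulVec_smul, hMterm, smul_smul]
      rcases eq_or_ne (hM.eigenvalues j) 0 with h0 | h0
      · rw [h0, mul_zero, zero_smul]
        
      · have hev : Module.End.HasEigenvalue (Matrix.toLin' M) (hM.eigenvalues j) := by
          apply Module.End.hasEigenvalue_of_hasEigenvector (x := ⇑(B j))
          constructor
          · rw [Module.End.mem_eigenspace_iff, Matrix.toLin'_apply,
              hM.mulVec_eigenvectorBasis]
          · exact fun hc => B.orthonormal.ne_zero j (by ext i; exact congrFun hc i)
        have hc : B.repr (e.symm y) j = 0 :=
          (mul_eq_zero.mp (hrepr j)).resolve_left (hP _ h0 hev)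
        rw [hc, zero_mul, zero_smul]
    -- conclude A y = 0
    have hAy : A.mulVec y = 0 := by
      have hdot : (A.mulVec y) ⬝ᵥ (A.mulVec y) = 0 := by
        have : y ⬝ᵥ (M.mulVec y) = 0 := by rw [hMy, dotProduct_zero]
        rwa [hMdef, ← Matrix.mulVec_mulVec, Matrix.dotProduct_mulVec,
          Matrix.vecMul_transpose] at this
      exact dotProduct_self_eq_zero.mp hdot
    have : A.mulVec x - A.mulVec x₀ = 0 := by
      rw [← Matrix.mulVec_sub]; exact hAy
    rw [hx₀] at this
    exact sub_eq_zero.mp this
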